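/- Let v : Ω → ℝ be measurable, g ∈ L¹(Ω) with g ≥ 0, and Ω(s) the nested set-valued map associated to v with |Ω(s)| = s. Then s ↦ ∫_{Ω(s)} g dx is absolutely continuous on (0,|Ω|); denoting its derivative by D(s), one has ∫₀ᵗ D(s) ds = ∫_{Ω(t)} g dx ≤ ∫₀ᵗ ḡ(s) ds for every t ∈ (0,|Ω|), where ḡ is the decreasing rearrangement of g. -/

import Mathlib

open MeasureTheory Set

/-- Decreasing rearrangement of `g` on `Ω`. -/
noncomputable def rearr {N : ℕ} (Ω : Set (EuclideanSpace ℝ (Fin N)))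
    (g : EuclideanSpace ℝ (Fin N) → ℝ) (s : ℝ) : ℝ :=
  sInf {t : ℝ | 0 ≤ t ∧ (volume {x ∈ Ω | |g x| > t}).toReal < s}

/-- Absolute continuity and fundamental theorem of calculus for the
pseudo-rearrangement primitive `s ↦ ∫_{Ω(s)} g`. -/
theorem stmt_5 {N : ℕ} (Ω : Set (EuclideanSpace ℝ (Fin N)))
    (hΩm : MeasurableSet Ω) (hΩb : Bornology.IsBounded Ω)
    (v : EuclideanSpace ℝ (Fin N) → ℝ) (hv : Measurable v)
    (g : EuclideanSpace ℝ (Fin N) → ℝ) (hg : 0 ≤ g)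
    (hgint : IntegrableOn g Ω)
    (F : ℝ → Set (EuclideanSpace ℝ (Fin N)))
    (hFmeas : ∀ s, MeasurableSet (F s))
    (hFsub : ∀ s, F s ⊆ Ω)
    (hFvol : ∀ s ∈ Icc (0 : ℝ) (volume Ω).toReal, (volume (F s)).toReal = s)
    (hFmono : ∀ s₁ s₂, s₁ < s₂ → F s₁ ⊆ F s₂)
    (hFadapted : ∀ s ∈ Icc (0 : ℝ) (volume Ω).toReal,
      {x ∈ Ω | |v x| > rearr Ω v s} ⊆ F s ∧
        F s ⊆ {x ∈ Ω | |v x| ≥ rearr Ω v s}) :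
    -- the primitive is absolutely continuous on (0,|Ω|)
    (∀ ε > (0 : ℝ), ∃ δ > (0 : ℝ), ∀ (n : ℕ) (a b : Fin n → ℝ),
      (∀ i, 0 < a i ∧ a i ≤ b i ∧ b i < (volume Ω).toReal) →
      (Pairwise fun i j => Disjoint (Ioc (a i) (b i)) (Ioc (a j) (b j))) →
      (∑ i, (b i - a i)) < δ →
      (∑ i, |(∫ x in F (b i), g x) - ∫ x in F (a i), g x|) < ε) ∧
    -- its a.e. derivative D satisfies the FTC identity and the bound
    ∃ D : ℝ → ℝ,
      (∀ᵐ s ∂(volume.restrict (Ioo (0 : ℝ) (volume Ω).toReal)),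
        HasDerivAt (fun t => ∫ x in F t, g x) (D s) s) ∧
      ∀ t ∈ Ioo (0 : ℝ) (volume Ω).toReal,
        (∫ s in (0 : ℝ)..t, D s) = (∫ x in F t, g x) ∧
        (∫ x in F t, g x) ≤ ∫ s in (0 : ℝ)..t, rearr Ω g s := by
  -- Notation
  set m : ℝ := (volume Ω).toReal with hm
  have hΩfin : volume Ω ≠ ⊤ := hΩb.measure_lt_top.ne
  have hm0 : 0 ≤ m := ENNReal.toReal_nonneg
  -- a measurable nonnegative representative of g
  obtain ⟨g', hg'meas, hg'0, hg'ae⟩ :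
      ∃ g' : EuclideanSpace ℝ (Fin N) → ℝ, Measurable g' ∧ 0 ≤ g' ∧
        g =ᵐ[volume.restrict Ω] g' := by
    obtain ⟨g₀, hg₀m, hg₀e⟩ := hgint.aemeasurable
    exact ⟨fun x => max (g₀ x) 0, hg₀m.max measurable_const, fun x => le_max_right _ _,
      hg₀e.mono fun x hx => by
        show g x = max (g₀ x) 0; rw [← hx]; exact (max_eq_left (hg x)).symm⟩
  set h : EuclideanSpace ℝ (Fin N) → ENNReal := fun x => ENNReal.ofReal (g' x) with hh
  have hhmeas : Measurable h := ENNReal.measurable_ofReal.comp hg'meas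
  -- basic facts about F
  have hFm' : ∀ a b : ℝ, a ≤ b → F a ⊆ F b := by
    intro a b hab
    rcases eq_or_lt_of_le hab with rfl | hlt
    · exact subset_rfl
    · exact hFmono _ _ hlt
  have hFfin : ∀ s, volume (F s) ≠ ⊤ :=
    fun s => ((measure_mono (hFsub s)).trans_lt hΩb.measure_lt_top).ne
  have hFvol' : ∀ s, 0 ≤ s → s ≤ m → volume (F s) = ENNReal.ofReal s := by
    intro s h0 h1
    rw [← ENNReal.ofReal_toReal (hFfin s), hFvol s ⟨h0, h1⟩]
  -- transfer a.e. facts about g to subsets of Ω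
  have haeS : ∀ S : Set (EuclideanSpace ℝ (Fin N)), S ⊆ Ω → MeasurableSet S →
      g =ᵐ[volume.restrict S] g' := by
    intro S hS hSm
    exact ae_restrict_of_ae_restrict_of_subset hS hg'ae
  -- integral vs lintegral on subsets of Ω
  have hlint : ∀ S : Set (EuclideanSpace ℝ (Fin N)), S ⊆ Ω → MeasurableSet S →
      (∫ x in S, g x) = (∫⁻ x in S, h x).toReal := by
    intro S hS hSm
    rw [integral_eq_lintegral_of_nonneg_ae (Filter.Eventually.of_forall fun x => hg x)
      (hgint.mono_set hS).1]
    exact congrArg ENNReal.toReal (lintegral_congr_ae ((haeS S hS hSm).mono fun x hx => by simp only [hh]; rw [hx]))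
  have hlintΩ : (∫⁻ x in Ω, h x) ≠ ⊤ := by
    have := (hgint.congr (haeS Ω subset_rfl hΩm)).2
    rw [hasFiniteIntegral_iff_norm] at this
    refine ne_of_lt (lt_of_le_of_lt (lintegral_mono_ae ?_) this)
    exact (ae_restrict_of_ae (Filter.Eventually.of_forall fun x =>
      le_of_eq (by rw [Real.norm_eq_abs, abs_of_nonneg (hg'0 x)]))) 
  have hlintS : ∀ S : Set (EuclideanSpace ℝ (Fin N)), S ⊆ Ω →
      (∫⁻ x in S, h x) ≠ ⊤ := by
    intro S hS
    refine ne_of_lt (lt_of_le_of_lt ?_ hlintΩ.lt_top)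
    exact lintegral_mono' (Measure.restrict_mono hS le_rfl) le_rfl
  -- the primitive and its monotonicity
  set φ : ℝ → ℝ := fun t => ∫ x in F t, g x with hφ
  have hφmono : Monotone φ := by
    intro a b hab
    exact setIntegral_mono_set (hgint.mono_set (hFsub b))
      (ae_restrict_of_ae (Filter.Eventually.of_forall fun x => hg x))
      (HasSubset.Subset.eventuallyLE (hFm' a b hab))
  have hφdiff : ∀ a b : ℝ, a ≤ b → φ b - φ a = (∫⁻ x in F b \ F a, h x).toReal := by
    intro a b hab
    have hsplit : (∫⁻ x in F b, h x) = (∫⁻ x in F a, h x) + ∫⁻ x in F b \ F a, h x := by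
      rw [← lintegral_union (hFmeas b |>.diff (hFmeas a)) disjoint_sdiff_self_right,
        union_diff_cancel (hFm' a b hab)]
    simp only [hφ]
    rw [hlint _ (hFsub b) (hFmeas b), hlint _ (hFsub a) (hFmeas a), hsplit,
      ENNReal.toReal_add (hlintS _ (hFsub a)) (hlintS _ ((diff_subset).trans (hFsub b)))]
    ring
  constructor
  · -- absolute continuity
    intro ε hε
    obtain ⟨δ, hδ0, hδ⟩ := exists_pos_setLIntegral_lt_of_measure_lt
      (μ := volume.restrict Ω) (f := h) hlintΩ (ENNReal.ofReal_pos.mpr hε).ne'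
    obtain ⟨δr, hδr0, hδrlt⟩ : ∃ δr : ℝ, 0 < δr ∧ ENNReal.ofReal δr < δ := by
      rcases eq_or_ne δ ⊤ with rfl | hδt
      · exact ⟨1, one_pos, ENNReal.ofReal_lt_top⟩
      · refine ⟨δ.toReal / 2, by
          have := ENNReal.toReal_pos hδ0.ne' hδt
          positivity, ?_⟩
        have h1 : δ.toReal / 2 < δ.toReal := by
          have := ENNReal.toReal_pos hδ0.ne' hδt
          linarith
        calc ENNReal.ofReal (δ.toReal / 2) < ENNReal.ofReal δ.toReal :=
              (ENNReal.ofReal_lt_ofReal_iff (ENNReal.toReal_pos hδ0.ne' hδt)).mpr h1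
          _ = δ := ENNReal.ofReal_toReal hδt
    refine ⟨δr, hδr0, ?_⟩
    intro n a b hab hdisj hsum
    set Ds : Fin n → Set (EuclideanSpace ℝ (Fin N)) := fun i => F (b i) \ F (a i) with hDs
    have hDmeas : ∀ i, MeasurableSet (Ds i) := fun i => (hFmeas _).diff (hFmeas _)
    have hDdisj : Pairwise (Function.onFun Disjoint Ds) := by
      intro i j hij
      rcases eq_or_lt_of_le (hab i).2.1 with hi | hi
      · have hie : Ds i = ∅ := by simp [hDs, ← hi]
        simp [Function.onFun, hie]
      rcases eq_or_lt_of_le (hab j).2.1 with hj | hj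
      · have hje : Ds j = ∅ := by simp [hDs, ← hj]
        simp [Function.onFun, hje]
      have key : b i ≤ a j ∨ b j ≤ a i := by
        by_contra hcon
        push_neg at hcon
        have hx : min (b i) (b j) ∈ Ioc (a i) (b i) ∩ Ioc (a j) (b j) :=
          ⟨⟨lt_min hi hcon.2, min_le_left _ _⟩, ⟨lt_min hcon.1 hj, min_le_right _ _⟩⟩
        exact Set.disjoint_left.mp (hdisj hij) hx.1 hx.2
      rcases key with hk | hk
      · exact disjoint_sdiff_self_right.mono_left (diff_subset.trans (hFm' _ _ hk))
      · exact (disjoint_sdiff_self_right.mono_left (diff_subset.trans (hFm' _ _ hk))).symm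
    have hDvol : ∀ i, volume (Ds i) = ENNReal.ofReal (b i - a i) := by
      intro i
      rw [hDs]
      rw [measure_diff (hFm' _ _ (hab i).2.1) (hFmeas (a i)).nullMeasurableSet (hFfin (a i)),
        hFvol' _ (lt_of_lt_of_le (hab i).1 (hab i).2.1).le (hab i).2.2.le,
        hFvol' _ (hab i).1.le ((hab i).2.1.trans (hab i).2.2.le),
        ENNReal.ofReal_sub _ (hab i).1.le]
    have hUsub : (⋃ i, Ds i) ⊆ Ω := iUnion_subset fun i => diff_subset.trans (hFsub _)
    have hU : volume (⋃ i, Ds i) < δ := by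
      calc volume (⋃ i, Ds i) ≤ ∑' i, volume (Ds i) := measure_iUnion_le _
        _ = ∑ i, volume (Ds i) := tsum_fintype _
        _ = ENNReal.ofReal (∑ i, (b i - a i)) := by
            rw [ENNReal.ofReal_sum_of_nonneg fun i _ => sub_nonneg.mpr (hab i).2.1]
            exact Finset.sum_congr rfl fun i _ => hDvol i
        _ < ENNReal.ofReal δr := (ENNReal.ofReal_lt_ofReal_iff hδr0).mpr hsum
        _ < δ := hδrlt
    have hint := hδ (⋃ i, Ds i) (lt_of_le_of_lt (Measure.le_iff'.1 Measure.restrict_le_self _) hU)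
    rw [Measure.restrict_restrict (MeasurableSet.iUnion hDmeas),
      inter_eq_self_of_subset_left hUsub] at hint
    have hsumeq : (∑ i, |φ (b i) - φ (a i)|) = (∫⁻ x in ⋃ i, Ds i, h x).toReal := by
      rw [lintegral_iUnion hDmeas hDdisj, tsum_fintype,
        ENNReal.toReal_sum fun i _ => hlintS _ (diff_subset.trans (hFsub _))]
      refine Finset.sum_congr rfl fun i _ => ?_
      rw [abs_of_nonneg (sub_nonneg.mpr (hφmono (hab i).2.1)), hφdiff _ _ (hab i).2.1]
    calc (∑ i, |φ (b i) - φ (a i)|) = (∫⁻ x in ⋃ i, Ds i, h x).toReal := hsumeq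
      _ < ε := ENNReal.toReal_lt_of_lt_ofReal hint
  · -- derivative part
    -- the transport map τ
    set S : EuclideanSpace ℝ (Fin N) → Set ℝ :=
      fun x => {s : ℝ | 0 ≤ s ∧ x ∈ F s} ∪ {m + 1} with hSdef
    set τ : EuclideanSpace ℝ (Fin N) → ℝ := fun x => sInf (S x) with hτ
    have hSne : ∀ x, (S x).Nonempty := fun x => ⟨m + 1, Or.inr rfl⟩
    have hSbdd : ∀ x, BddBelow (S x) := by
      intro x
      refine ⟨0, fun s hs => ?_⟩
      rcases hs with hs | hs
      · exact hs.1
      · simp only [mem_singleton_iff] at hs; rw [hs]; linarith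
    have hτ0 : ∀ x, 0 ≤ τ x := fun x => le_csInf (hSne x) (fun s hs => by
      rcases hs with hs | hs
      · exact hs.1
      · simp only [mem_singleton_iff] at hs; rw [hs]; linarith)
    have hτle : ∀ x s, 0 ≤ s → x ∈ F s → τ x ≤ s :=
      fun x s h0 hx => csInf_le (hSbdd x) (Or.inl ⟨h0, hx⟩)
    have hτlt : ∀ x t, τ x < t → m + 1 < t ∨ ∃ s, 0 ≤ s ∧ x ∈ F s ∧ s < t := by
      intro x t hxt
      obtain ⟨s, hs, hst⟩ := exists_lt_of_csInf_lt (hSne x) hxt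
      rcases hs with hs | hs
      · exact Or.inr ⟨s, hs.1, hs.2, hst⟩
      · simp only [mem_singleton_iff] at hs; rw [hs] at hst; exact Or.inl hst
    have hτmeas : Measurable τ := by
      apply measurable_of_Iio
      intro t
      have hrep : τ ⁻¹' Iio t = (⋃ q : {q : ℚ // 0 ≤ (q : ℝ) ∧ (q : ℝ) < t}, F ((q : ℚ) : ℝ)) ∪
          (if m + 1 < t then univ else (∅ : Set _)) := by
        ext x
        simp only [mem_preimage, mem_Iio, mem_union, mem_iUnion]
        constructor
        · intro hx
          rcases hτlt x t hx with hc | ⟨s, hs0, hsF, hst⟩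
          · right; simp [hc]
          · obtain ⟨q, hq1, hq2⟩ := exists_rat_btwn hst
            exact Or.inl ⟨⟨q, le_trans hs0 hq1.le, hq2⟩, hFm' s q hq1.le hsF⟩
        · intro hx
          rcases hx with ⟨⟨q, hq0, hqt⟩, hxq⟩ | hx
          · exact lt_of_le_of_lt (hτle x q hq0 hxq) hqt
          · by_cases hc : m + 1 < t
            · exact lt_of_le_of_lt (csInf_le (hSbdd x) (Or.inr rfl)) hc
            · simp [hc] at hx
      rw [hrep]
      refine MeasurableSet.union (MeasurableSet.iUnion fun q => hFmeas _) ?_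
      split <;> simp
    -- measure of sublevel sets of τ inside F m
    have hKlt : ∀ u : ℝ, volume ({x | τ x < u} ∩ F m) ≤ ENNReal.ofReal (min u m) := by
      intro u
      by_cases hu : 0 < u
      swap
      · have hemp : {x | τ x < u} ∩ F m = ∅ := by
          ext x
          simp only [mem_inter_iff, mem_setOf_eq, mem_empty_iff_false, iff_false, not_and]
          intro hx
          exact absurd hx (not_lt.mpr (le_trans (not_lt.mp hu) (hτ0 x)))
        rw [hemp]
        simp
      · have hsub : {x | τ x < u} ∩ F m ⊆
            ⋃ q : {q : ℚ // 0 ≤ (q : ℝ) ∧ (q : ℝ) < u}, F (min ((q : ℚ) : ℝ) m) := by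
          rintro x ⟨hx, hxm⟩
          rcases hτlt x u hx with hc | ⟨s, hs0, hsF, hsu⟩
          · obtain ⟨q, hq1, hq2⟩ := exists_rat_btwn (lt_trans (by linarith : m < m + 1) hc)
            refine mem_iUnion.mpr ⟨⟨q, le_trans hm0 hq1.le, hq2⟩, ?_⟩
            rw [min_eq_right hq1.le]
            exact hxm
          · obtain ⟨q, hq1, hq2⟩ := exists_rat_btwn hsu
            refine mem_iUnion.mpr ⟨⟨q, le_trans hs0 hq1.le, hq2⟩, ?_⟩
            rcases le_total ((q : ℚ) : ℝ) m with hqm | hqm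
            · rw [min_eq_left hqm]; exact hFm' s q hq1.le hsF
            · rw [min_eq_right hqm]; exact hxm
        refine le_trans (measure_mono hsub) ?_
        have hdir : Directed (· ⊆ ·) (fun q : {q : ℚ // 0 ≤ (q : ℝ) ∧ (q : ℝ) < u} =>
            F (min ((q : ℚ) : ℝ) m)) := by
          rintro ⟨q1, hq1⟩ ⟨q2, hq2⟩
          refine ⟨⟨max q1 q2, ?_, ?_⟩, hFm' _ _ ?_, hFm' _ _ ?_⟩
          · rw [Rat.cast_max]; exact le_trans hq1.1 (le_max_left _ _)
          · rw [Rat.cast_max]; exact max_lt hq1.2 hq2.2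
          · rw [Rat.cast_max]; exact min_le_min (le_max_left _ _) le_rfl
          · rw [Rat.cast_max]; exact min_le_min (le_max_right _ _) le_rfl
        rw [hdir.measure_iUnion]
        refine iSup_le fun q => ?_
        rw [hFvol' _ (le_min q.2.1 hm0) (min_le_right _ _)]
        exact ENNReal.ofReal_le_ofReal (min_le_min q.2.2.le le_rfl)
    have hKvol : ∀ t : ℝ, 0 ≤ t → volume (τ ⁻¹' Iic t ∩ F m) = ENNReal.ofReal (min t m) := by
      intro t ht
      refine le_antisymm ?_ ?_
      · have hmono2 : ∀ n : ℕ, volume ({x | τ x ≤ t} ∩ F m) ≤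
            ENNReal.ofReal (min (t + 1 / (n + 1)) m) := by
          intro n
          refine le_trans (measure_mono ?_) (hKlt (t + 1 / (n + 1)))
          rintro x ⟨hx, hxm⟩
          have hxt : τ x ≤ t := hx
          have hpos : (0 : ℝ) < 1 / ((n : ℝ) + 1) := by positivity
          exact ⟨lt_of_le_of_lt hxt (by linarith), hxm⟩
        have htend : Filter.Tendsto (fun n : ℕ => ENNReal.ofReal (min (t + 1 / (n + 1)) m))
            Filter.atTop (nhds (ENNReal.ofReal (min t m))) := by
          have h1 : Filter.Tendsto (fun n : ℕ => t + 1 / ((n : ℝ) + 1)) Filter.atTop (nhds t) := by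
            have := tendsto_one_div_add_atTop_nhds_zero_nat (𝕜 := ℝ)
            have h2 := this.const_add t
            simpa using h2
          exact (ENNReal.continuous_ofReal.tendsto _).comp (h1.min tendsto_const_nhds)
        exact ge_of_tendsto htend (Filter.Eventually.of_forall hmono2)
      · refine le_trans (le_of_eq (hFvol' (min t m) (le_min ht hm0) (min_le_right _ _)).symm)
          (measure_mono ?_)
        intro x hx
        exact ⟨le_trans (hτle x _ (le_min ht hm0) hx) (min_le_left _ _),
          hFm' _ _ (min_le_right _ _) hx⟩
    -- the pushforward measure
    set ρ : Measure (EuclideanSpace ℝ (Fin N)) := (volume.restrict (F m)).withDensity h with hρ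
    set ν : Measure ℝ := ρ.map τ with hν
    have hρap : ∀ A : Set ℝ, MeasurableSet A → ν A = ∫⁻ x in τ ⁻¹' A ∩ F m, h x := by
      intro A hA
      rw [hν, Measure.map_apply hτmeas hA, hρ, withDensity_apply _ (hτmeas hA),
        Measure.restrict_restrict (hτmeas hA)]
    have hνfin : IsFiniteMeasure ν := by
      constructor
      rw [hρap univ MeasurableSet.univ]
      refine lt_of_le_of_lt (lintegral_mono' (Measure.restrict_mono ?_ le_rfl) le_rfl)
        hlintΩ.lt_top
      exact (inter_subset_right).trans (hFsub m)
    haveI := hνfin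
    have hlameq : (volume.restrict (F m)).map τ = volume.restrict (Ioc 0 m) := by
      have hfin : IsFiniteMeasure ((volume.restrict (F m)).map τ) := by
        constructor
        rw [Measure.map_apply hτmeas MeasurableSet.univ]
        rw [preimage_univ, Measure.restrict_apply_univ]
        exact (hFfin m).lt_top
      haveI := hfin
      refine Measure.ext_of_Iic _ _ (fun t => ?_)
      rw [Measure.map_apply hτmeas measurableSet_Iic,
        Measure.restrict_apply (hτmeas measurableSet_Iic),
        Measure.restrict_apply measurableSet_Iic]
      rcases le_or_gt 0 t with ht | ht
      · rw [hKvol t ht]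
        have hIeq : Iic t ∩ Ioc 0 m = Ioc 0 (min t m) := by
          ext s
          simp only [mem_inter_iff, mem_Iic, mem_Ioc, lt_min_iff, le_min_iff]
          constructor
          · rintro ⟨h1, h2, h3⟩; exact ⟨h2, h1, h3⟩
          · rintro ⟨h1, h2, h3⟩; exact ⟨h2, h1, h3⟩
        rw [hIeq, Real.volume_Ioc, sub_zero]
      · have h1 : τ ⁻¹' Iic t ∩ F m = ∅ := by
          ext x
          simp only [mem_inter_iff, mem_preimage, mem_Iic, mem_empty_iff_false, iff_false, not_and]
          intro hx
          exact absurd hx (not_le.mpr (lt_of_lt_of_le ht (hτ0 x)))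
        have h2 : Iic t ∩ Ioc 0 m = ∅ := by
          ext s
          simp only [mem_inter_iff, mem_Iic, mem_Ioc, mem_empty_iff_false, iff_false, not_and]
          intro hs hc
          exact absurd (lt_of_lt_of_le hc hs) (not_lt.mpr ht.le)
        rw [h1, h2]
        simp
    have hνac : ν ≪ (volume : Measure ℝ) := by
      refine Measure.AbsolutelyContinuous.mk (fun A hA hA0 => ?_)
      rw [hρap A hA]
      have hnull : volume (τ ⁻¹' A ∩ F m) = 0 := by
        have hcong := congrArg (fun μ : Measure ℝ => μ A) hlameq
        simp only [Measure.map_apply hτmeas hA, Measure.restrict_apply (hτmeas hA),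
          Measure.restrict_apply hA] at hcong
        rw [hcong]
        exact measure_mono_null inter_subset_left hA0
      exact setLIntegral_measure_zero _ _ hnull
    have hνIic : ∀ t, 0 ≤ t → t ≤ m → ν (Iic t) = ∫⁻ x in F t, h x := by
      intro t h0 h1
      rw [hρap _ measurableSet_Iic]
      refine (setLIntegral_congr (ae_eq_of_subset_of_measure_ge ?_ ?_ ?_ ?_)).symm
      · intro x hx
        exact ⟨hτle x t h0 hx, hFm' t m h1 hx⟩
      · rw [hKvol t h0, hFvol' t h0 h1]
        exact ENNReal.ofReal_le_ofReal (min_le_left _ _)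
      · exact (hFmeas t).nullMeasurableSet
      · exact ((measure_mono inter_subset_right).trans_lt (hFfin m).lt_top).ne
    have hφnonneg : ∀ t, 0 ≤ φ t := by
      intro t
      exact setIntegral_nonneg (hFmeas t) (fun x _ => hg x)
    have hνIoc : ∀ t, 0 ≤ t → t ≤ m → ν (Ioc 0 t) = ENNReal.ofReal (φ t) := by
      intro t h0 h1
      have hν0 : ν (Iic 0) = 0 := by
        rw [hνIic 0 le_rfl hm0]
        have hF0 : volume (F 0) = 0 := by simpa using hFvol' 0 le_rfl hm0
        rw [Measure.restrict_eq_zero.mpr hF0, lintegral_zero_measure]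
      have hd : Disjoint (Iic (0 : ℝ)) (Ioc 0 t) := Iic_disjoint_Ioc le_rfl
      have hu : Iic (0 : ℝ) ∪ Ioc 0 t = Iic t := Iic_union_Ioc_eq_Iic h0
      have hm2 := measure_union (μ := ν) hd measurableSet_Ioc
      rw [hu, hν0, zero_add, hνIic t h0 h1] at hm2
      rw [← hm2]
      simp only [hφ]
      rw [hlint _ (hFsub t) (hFmeas t), ENNReal.ofReal_toReal (hlintS _ (hFsub t))]
    -- the derivative
    set D : ℝ → ℝ := fun s => (ν.rnDeriv volume s).toReal with hD
    have hDmeas2 : Measurable D := (Measure.measurable_rnDeriv _ _).ennreal_toReal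
    have hD0 : ∀ s, 0 ≤ D s := fun s => ENNReal.toReal_nonneg
    have hDint : Integrable D volume := Measure.integrable_toReal_rnDeriv
    set ψ : ℝ → ℝ := fun t => ∫ s in (0 : ℝ)..t, D s with hψdef
    have hψFTC : ∀ t, 0 ≤ t → ψ t = (ν (Ioc 0 t)).toReal := by
      intro t ht
      show (∫ s in (0 : ℝ)..t, D s) = (ν (Ioc 0 t)).toReal
      rw [intervalIntegral.integral_of_le ht]
      exact Measure.setIntegral_toReal_rnDeriv' hνac measurableSet_Ioc
    have hψφ : ∀ t, 0 ≤ t → t ≤ m → ψ t = φ t := by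
      intro t h0 h1
      rw [hψFTC t h0, hνIoc t h0 h1, ENNReal.toReal_ofReal (hφnonneg t)]
    have hHL : ∀ t ∈ Ioo (0 : ℝ) m, φ t ≤ ∫ s in (0 : ℝ)..t, rearr Ω g s := by
      intro t ht
      -- distribution function of the measurable representative
      set dE : ℝ → ENNReal := fun r => volume {x ∈ Ω | g' x > r} with hdE
      have hdEeq : ∀ r : ℝ, volume {x ∈ Ω | |g x| > r} = dE r := by
        intro r
        have hZ : volume ({x | g x ≠ g' x} ∩ Ω) = 0 := by
          have h0 := hg'ae
          rw [Filter.EventuallyEq, ae_iff, Measure.restrict_apply' hΩm] at h0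
          exact h0
        refine measure_congr ?_
        rw [Filter.eventuallyEq_set, ae_iff]
        refine measure_mono_null ?_ hZ
        intro x hx
        simp only [mem_setOf_eq] at hx
        simp only [mem_inter_iff, mem_setOf_eq]
        by_cases hxΩ : x ∈ Ω
        · refine ⟨fun hgg => hx ?_, hxΩ⟩
          constructor
          · rintro ⟨h1, h2⟩
            refine ⟨h1, ?_⟩
            rw [← hgg, ← abs_of_nonneg (hg x)]
            exact h2
          · rintro ⟨h1, h2⟩
            refine ⟨h1, ?_⟩
            rw [abs_of_nonneg (hg x), hgg]
            exact h2
        · exact absurd (by constructor <;> (rintro ⟨h1, h2⟩; exact absurd h1 hxΩ)) hx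
      have hdEfin : ∀ r, dE r ≠ ⊤ := fun r =>
        ((measure_mono (sep_subset _ _)).trans_lt hΩb.measure_lt_top).ne
      have hdEanti : Antitone dE := by
        intro r1 r2 h12
        exact measure_mono (fun x hx => ⟨hx.1, lt_of_le_of_lt h12 hx.2⟩)
      have hrearr : ∀ s : ℝ, rearr Ω g s = sInf {u : ℝ | 0 ≤ u ∧ (dE u).toReal < s} := by
        intro s
        rw [rearr]
        congr 1
        ext u
        rw [mem_setOf_eq, mem_setOf_eq, hdEeq u]
      set R : ℝ → ℝ := fun s => sInf {u : ℝ | 0 ≤ u ∧ (dE u).toReal < s} with hR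
      have hR0 : ∀ s, 0 ≤ R s := fun s => Real.sInf_nonneg (fun u hu => hu.1)
      have hTne : ∀ s : ℝ, 0 < s → {u : ℝ | 0 ≤ u ∧ (dE u).toReal < s}.Nonempty := by
        intro s hs
        have hmeasA : ∀ n : ℕ, NullMeasurableSet {x ∈ Ω | g' x > (n : ℝ)} volume := fun n =>
          (hΩm.inter (measurableSet_lt measurable_const hg'meas)).nullMeasurableSet
        have hanti : Antitone (fun n : ℕ => {x ∈ Ω | g' x > (n : ℝ)}) := by
          intro n1 n2 h12 x hx
          exact ⟨hx.1, lt_of_le_of_lt (by exact_mod_cast h12) hx.2⟩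
        have hInt : (⋂ n : ℕ, {x ∈ Ω | g' x > (n : ℝ)}) = ∅ := by
          ext x
          simp only [mem_iInter, mem_setOf_eq, mem_empty_iff_false, iff_false, not_forall]
          obtain ⟨n, hn⟩ := exists_nat_gt (g' x)
          exact ⟨n, fun hc => absurd hc.2 (not_lt.mpr hn.le)⟩
        have htnd := tendsto_measure_iInter_atTop (μ := volume) hmeasA hanti
          ⟨0, ((measure_mono (sep_subset _ _)).trans_lt hΩb.measure_lt_top).ne⟩
        rw [hInt, measure_empty] at htnd
        have hev := htnd.eventually_lt_const (ENNReal.ofReal_pos.mpr hs)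
        obtain ⟨n, hn⟩ := hev.exists
        exact ⟨(n : ℝ), Nat.cast_nonneg n, ENNReal.toReal_lt_of_lt_ofReal hn⟩
      have hRgt : ∀ r s : ℝ, 0 ≤ r → 0 < s → ENNReal.ofReal s < dE r → r < R s := by
        intro r s hr hs hlt
        have hUn : {x ∈ Ω | g' x > r} = ⋃ n : ℕ, {x ∈ Ω | g' x > r + 1 / ((n : ℝ) + 1)} := by
          ext x
          simp only [mem_setOf_eq, mem_iUnion]
          constructor
          · rintro ⟨hxΩ, hxr⟩
            obtain ⟨n, hn⟩ := exists_nat_one_div_lt (sub_pos.mpr hxr)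
            exact ⟨n, hxΩ, by push_cast at hn ⊢; linarith⟩
          · rintro ⟨n, hxΩ, hxr⟩
            have hpos : (0 : ℝ) < 1 / ((n : ℝ) + 1) := by positivity
            exact ⟨hxΩ, by linarith⟩
        have hmonoU : Monotone (fun n : ℕ => {x ∈ Ω | g' x > r + 1 / ((n : ℝ) + 1)}) := by
          intro n1 n2 h12 x hx
          refine ⟨hx.1, lt_of_le_of_lt ?_ hx.2⟩
          have h1 : ((n1 : ℝ) + 1) ≤ ((n2 : ℝ) + 1) := by exact_mod_cast Nat.succ_le_succ h12
          have h2 : (0 : ℝ) < (n1 : ℝ) + 1 := by positivity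
          exact add_le_add (le_refl r) (one_div_le_one_div_of_le h2 h1)
        have hsup := hmonoU.measure_iUnion (μ := volume)
        rw [← hUn] at hsup
        have hlt2 : ENNReal.ofReal s
            < ⨆ n : ℕ, volume {x ∈ Ω | g' x > r + 1 / ((n : ℝ) + 1)} := by
          rw [← hsup]
          exact hlt
        obtain ⟨n, hn⟩ := lt_iSup_iff.mp hlt2
        have hlow : ∀ u ∈ {u : ℝ | 0 ≤ u ∧ (dE u).toReal < s}, r + 1 / ((n : ℝ) + 1) ≤ u := by
          intro u hu
          by_contra hcon
          push_neg at hcon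
          have h1 : dE (r + 1 / ((n : ℝ) + 1)) ≤ dE u := hdEanti hcon.le
          have h2 : ENNReal.ofReal s < dE u := lt_of_lt_of_le hn h1
          have h3 : s < (dE u).toReal := (ENNReal.ofReal_lt_iff_lt_toReal hs.le (hdEfin u)).mp h2
          linarith [hu.2]
        have hcs := le_csInf (hTne s hs) hlow
        have hpos : (0 : ℝ) < 1 / ((n : ℝ) + 1) := by positivity
        calc r < r + 1 / ((n : ℝ) + 1) := by linarith
          _ ≤ R s := hcs
      have hRle : ∀ r s : ℝ, 0 ≤ r → (dE r).toReal < s → R s ≤ r :=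
        fun r s hr hlt => csInf_le ⟨0, fun u hu => hu.1⟩ ⟨hr, hlt⟩
      -- measure of the level sets of R within (0, t)
      have hlev : ∀ r : ℝ, 0 < r →
          volume ({s : ℝ | r < R s} ∩ Ioo 0 t) = min (ENNReal.ofReal t) (dE r) := by
        intro r hr
        have hddfin := hdEfin r
        have hminEq : ENNReal.ofReal (min t (dE r).toReal) = min (ENNReal.ofReal t) (dE r) := by
          rcases le_total t ((dE r).toReal) with hc | hc
          · rw [min_eq_left hc, min_eq_left]
            rw [← ENNReal.ofReal_toReal hddfin]
            exact ENNReal.ofReal_le_ofReal hc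
          · rw [min_eq_right hc, ENNReal.ofReal_toReal hddfin, min_eq_right]
            rw [← ENNReal.ofReal_toReal hddfin]
            exact ENNReal.ofReal_le_ofReal hc
        refine le_antisymm ?_ ?_
        · refine le_trans (measure_mono (?_ : _ ⊆ Ioc 0 (min t (dE r).toReal))) ?_
          · rintro s ⟨hs1, hs2, hs3⟩
            have hs1' : r < R s := hs1
            have hsd : s ≤ (dE r).toReal := by
              by_contra hcon
              push_neg at hcon
              exact absurd (hRle r s hr.le hcon) (not_le.mpr hs1')
            exact ⟨hs2, le_min hs3.le hsd⟩
          · rw [Real.volume_Ioc, sub_zero, hminEq]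
        · refine le_trans (le_of_eq ?_) (measure_mono (?_ : Ioo 0 (min t (dE r).toReal) ⊆ _))
          · rw [Real.volume_Ioo, sub_zero, hminEq]
          · rintro s ⟨hs1, hs2⟩
            rw [lt_min_iff] at hs2
            refine ⟨?_, hs1, hs2.1⟩
            show r < R s
            refine hRgt r s hr.le hs1 ?_
            exact (ENNReal.ofReal_lt_iff_lt_toReal hs1.le hddfin).mpr hs2.2
      -- rewrite the right-hand side with the layer cake formula
      have hRanti : AntitoneOn R (Ioo (0 : ℝ) t) := by
        intro s1 hs1 s2 _ h12
        exact csInf_le_csInf ⟨0, fun u hu => hu.1⟩ (hTne s1 hs1.1)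
          (fun u hu => ⟨hu.1, lt_of_lt_of_le hu.2 h12⟩)
      have hRaem : AEMeasurable R (volume.restrict (Ioo (0 : ℝ) t)) :=
        aemeasurable_restrict_of_antitoneOn measurableSet_Ioo hRanti
      have hlayerR : ∫⁻ s in Ioo (0 : ℝ) t, ENNReal.ofReal (R s)
          = ∫⁻ r in Ioi (0 : ℝ), (volume.restrict (Ioo (0 : ℝ) t)) {s | r < R s} :=
        lintegral_eq_lintegral_meas_lt _ (Filter.Eventually.of_forall hR0) hRaem
      have hRHS : ∫⁻ s in Ioo (0 : ℝ) t, ENNReal.ofReal (R s)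
          = ∫⁻ r in Ioi (0 : ℝ), min (ENNReal.ofReal t) (dE r) := by
        rw [hlayerR]
        refine setLIntegral_congr_fun measurableSet_Ioi
          (fun r hr => ?_)
        rw [Measure.restrict_apply' measurableSet_Ioo, hlev r hr]
      -- layer cake for the left-hand side
      have hgaem : AEMeasurable g (volume.restrict (F t)) :=
        hg'meas.aemeasurable.congr (haeS (F t) (hFsub t) (hFmeas t)).symm
      have hlayerL : ∫⁻ x in F t, h x
          = ∫⁻ r in Ioi (0 : ℝ), (volume.restrict (F t)) {x | r < g x} := by
        rw [← lintegral_eq_lintegral_meas_lt (volume.restrict (F t))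
          (Filter.Eventually.of_forall (fun x => hg x)) hgaem]
        refine lintegral_congr_ae ((haeS (F t) (hFsub t) (hFmeas t)).mono (fun x hx => ?_))
        simp only [hh]
        rw [hx]
      have hbound : ∀ r : ℝ,
          (volume.restrict (F t)) {x | r < g x} ≤ min (ENNReal.ofReal t) (dE r) := by
        intro r
        rw [Measure.restrict_apply' (hFmeas t)]
        refine le_min ?_ ?_
        · refine le_trans (measure_mono inter_subset_right) ?_
          rw [hFvol' t ht.1.le ht.2.le]
        · refine le_trans (measure_mono ?_) (le_of_eq (hdEeq r))
          rintro x ⟨hxg, hxF⟩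
          have hxg' : r < g x := hxg
          exact ⟨hFsub t hxF, by rw [abs_of_nonneg (hg x)]; exact hxg'⟩
      -- finiteness of the right-hand side
      have hRHSfin : (∫⁻ r in Ioi (0 : ℝ), min (ENNReal.ofReal t) (dE r)) ≠ ⊤ := by
        refine ne_top_of_le_ne_top hlintΩ ?_
        calc (∫⁻ r in Ioi (0 : ℝ), min (ENNReal.ofReal t) (dE r))
            ≤ ∫⁻ r in Ioi (0 : ℝ), dE r := lintegral_mono (fun r => min_le_right _ _)
          _ = ∫⁻ r in Ioi (0 : ℝ), (volume.restrict Ω) {x | r < g' x} := by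
              refine setLIntegral_congr_fun measurableSet_Ioi
                (fun r _ => ?_)
              rw [Measure.restrict_apply' hΩm]
              simp only [hdE]
              congr 1
              ext x
              simp only [mem_setOf_eq, mem_inter_iff]
              exact ⟨fun hx => ⟨hx.2, hx.1⟩, fun hx => ⟨hx.2, hx.1⟩⟩
          _ = ∫⁻ x in Ω, ENNReal.ofReal (g' x) :=
              (lintegral_eq_lintegral_meas_lt (volume.restrict Ω)
                (Filter.Eventually.of_forall (fun x => hg'0 x)) hg'meas.aemeasurable).symm
          _ = ∫⁻ x in Ω, h x := rfl
      have hchain : ∫⁻ x in F t, h x ≤ ∫⁻ s in Ioo (0 : ℝ) t, ENNReal.ofReal (R s) := by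
        rw [hlayerL, hRHS]
        exact lintegral_mono (fun r => hbound r)
      have hInt2 : ∫ s in Ioo (0 : ℝ) t, R s
          = (∫⁻ s in Ioo (0 : ℝ) t, ENNReal.ofReal (R s)).toReal := by
        rw [integral_eq_lintegral_of_nonneg_ae (Filter.Eventually.of_forall hR0)
          hRaem.aestronglyMeasurable]
      have hfin2 : (∫⁻ s in Ioo (0 : ℝ) t, ENNReal.ofReal (R s)) ≠ ⊤ := by
        rw [hRHS]
        exact hRHSfin
      have hφle : φ t ≤ ∫ s in Ioo (0 : ℝ) t, R s := by
        rw [hInt2]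
        simp only [hφ]
        rw [hlint _ (hFsub t) (hFmeas t)]
        exact ENNReal.toReal_mono hfin2 hchain
      have hident : (∫ s in (0 : ℝ)..t, rearr Ω g s) = ∫ s in Ioo (0 : ℝ) t, R s := by
        rw [intervalIntegral.integral_of_le ht.1.le, integral_Ioc_eq_integral_Ioo]
        exact setIntegral_congr_fun measurableSet_Ioo (fun s _ => hrearr s)
      exact le_trans hφle (le_of_eq hident.symm)
    have hadd : ∀ a b : ℝ, a ≤ b → ψ b - ψ a = ∫ s in Ioc a b, D s := by
      intro a b hab
      have h1 := intervalIntegral.integral_add_adjacent_intervals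
        (hDint.intervalIntegrable (a := 0) (b := a)) (hDint.intervalIntegrable (a := a) (b := b))
      have h2 : ψ a + ∫ s in a..b, D s = ψ b := h1
      rw [← h2, ← intervalIntegral.integral_of_le hab]
      ring
    have hψmono : Monotone ψ := by
      intro a b hab
      have h2 := hadd a b hab
      have h3 : 0 ≤ ∫ s in Ioc a b, D s :=
        setIntegral_nonneg measurableSet_Ioc (fun x _ => hD0 x)
      linarith
    have hψcont : Continuous ψ := intervalIntegral.continuous_primitive
      (fun a b => hDint.intervalIntegrable) 0
    have hψSF : ∀ x, hψmono.stieltjesFunction x = ψ x := by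
      intro x
      rw [hψmono.stieltjesFunction_eq]
      exact rightLim_eq_of_tendsto
        ((hψcont.tendsto x).mono_left nhdsWithin_le_nhds)
    have hSFmeas : hψmono.stieltjesFunction.measure
        = volume.withDensity (fun s => ENNReal.ofReal (D s)) := by
      refine Measure.ext_of_Ioc _ _ (fun a b hab => ?_)
      rw [StieltjesFunction.measure_Ioc, hψSF, hψSF, withDensity_apply _ measurableSet_Ioc,
        hadd a b hab.le, ofReal_integral_eq_lintegral_ofReal (hDint.integrableOn)
          (Filter.Eventually.of_forall hD0)]
    have hderiv : ∀ᵐ x : ℝ, HasDerivAt ψ (D x) x := by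
      have hrn := Measure.rnDeriv_withDensity (volume : Measure ℝ)
        (show Measurable fun s => ENNReal.ofReal (D s) from ENNReal.measurable_ofReal.comp hDmeas2)
      filter_upwards [hψmono.ae_hasDerivAt, hrn] with x hx hx2
      rw [hSFmeas, hx2, ENNReal.toReal_ofReal (hD0 x)] at hx
      exact hx
    refine ⟨D, ?_, ?_⟩
    · have h2 : ∀ᵐ s ∂volume.restrict (Ioo (0 : ℝ) m), HasDerivAt ψ (D s) s :=
        ae_restrict_of_ae hderiv
      filter_upwards [h2, ae_restrict_mem measurableSet_Ioo] with s hs hsm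
      refine hs.congr_of_eventuallyEq ?_
      filter_upwards [isOpen_Ioo.mem_nhds hsm] with u hu
      exact (hψφ u hu.1.le hu.2.le).symm
    · intro t ht
      exact ⟨hψφ t ht.1.le ht.2.le, hHL t ht⟩
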